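/- The set of solutions (p10, p12, p41, p43, p45, p119) ∈ ℚ^6 with all coordinates nonzero of the system p41 = p10^3·p12, p43 = p10^2·p12^2, p45 = p10·p12^3, p119 = p41·p43·p10^2·p12^3, p119 = p10^12, p119 = p12^10 is closed under componentwise multiplication and componentwise inversion, and forms a group of order exactly 2 (hence isomorphic to ℤ/2ℤ) with identity (1,1,1,1,1,1) and the unique nontrivial element (1,−1,−1,1,−1,1). -/

import Mathlib

private def vv : Fin 6 → ℚˣ := ![1, -1, -1, 1, -1, 1]

private lemma vv0 : vv 0 = 1 := rfl
private lemma vv1 : vv 1 = -1 := rfl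
private lemma vv2 : vv 2 = -1 := rfl
private lemma vv3 : vv 3 = 1 := rfl
private lemma vv4 : vv 4 = -1 := rfl
private lemma vv5 : vv 5 = 1 := rfl

private lemma vv_mul_vv : vv * vv = 1 := by
  funext i
  fin_cases i
  · show vv 0 * vv 0 = 1; rw [vv0, ← Units.val_inj]; push_cast; norm_num
  · show vv 1 * vv 1 = 1; rw [vv1, ← Units.val_inj]; push_cast; norm_num
  · show vv 2 * vv 2 = 1; rw [vv2, ← Units.val_inj]; push_cast; norm_num
  · show vv 3 * vv 3 = 1; rw [vv3, ← Units.val_inj]; push_cast; norm_num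
  · show vv 4 * vv 4 = 1; rw [vv4, ← Units.val_inj]; push_cast; norm_num
  · show vv 5 * vv 5 = 1; rw [vv5, ← Units.val_inj]; push_cast; norm_num

private lemma one_ne_vv : (1 : Fin 6 → ℚˣ) ≠ vv := by
  intro h
  have h1 := congrFun h 1
  rw [Pi.one_apply, vv1, ← Units.val_inj] at h1
  push_cast at h1
  norm_num at h1

private lemma key_set :
    {p : Fin 6 → ℚˣ | p 2 = p 0 ^ 3 * p 1 ∧
        p 3 = p 0 ^ 2 * p 1 ^ 2 ∧
        p 4 = p 0 * p 1 ^ 3 ∧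
        p 5 = p 2 * p 3 * p 0 ^ 2 * p 1 ^ 3 ∧
        p 5 = p 0 ^ 12 ∧
        p 5 = p 1 ^ 10} = {1, vv} := by
  ext p
  simp only [Set.mem_setOf_eq, Set.mem_insert_iff, Set.mem_singleton_iff]
  constructor
  · rintro ⟨h2, h3, h4, h5, h5', h5''⟩
    have ha0 : ((p 0 : ℚˣ) : ℚ) ≠ 0 := (p 0).ne_zero
    have hb0 : ((p 1 : ℚˣ) : ℚ) ≠ 0 := (p 1).ne_zero
    have f : ((p 0 : ℚˣ) : ℚ) ^ 12 = ((p 1 : ℚˣ) : ℚ) ^ 10 := by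
      have := congrArg Units.val (h5'.symm.trans h5'')
      push_cast at this; exact this
    have e3 : ((p 0 : ℚˣ) : ℚ) ^ 12 = ((p 0 : ℚˣ) : ℚ) ^ 7 * ((p 1 : ℚˣ) : ℚ) ^ 6 := by
      rw [h2, h3] at h5
      have := congrArg Units.val (h5'.symm.trans h5)
      push_cast at this
      rw [this]; ring
    set a : ℚ := ((p 0 : ℚˣ) : ℚ) with ha
    set b : ℚ := ((p 1 : ℚˣ) : ℚ) with hbdef
    have e4 : a ^ 5 = b ^ 6 :=
      mul_left_cancel₀ (pow_ne_zero 7 ha0) (by linear_combination e3)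
    have hfac : a ^ 25 * (a ^ 11 - 1) = 0 := by
      linear_combination (a ^ 24 + a ^ 12 * b ^ 10 + b ^ 20) * f -
        (a ^ 20 + a ^ 15 * b ^ 6 + a ^ 10 * b ^ 12 + a ^ 5 * b ^ 18 + b ^ 24) * e4
    have h11 : a ^ 11 = 1 := by
      rcases mul_eq_zero.mp hfac with h | h
      · exact absurd h (pow_ne_zero 25 ha0)
      · linarith
    have ea : a = 1 :=
      (Odd.strictMono_pow (R := ℚ) (⟨5, by norm_num⟩ : Odd 11)).injective
        (show a ^ 11 = 1 ^ 11 by rw [one_pow]; exact h11)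
    have hb6 : b ^ 6 = 1 := by rw [← e4, ea]; norm_num
    have hb10 : b ^ 10 = 1 := by rw [← f, ea]; norm_num
    have hb4 : b ^ 4 = 1 := by linear_combination hb10 - b ^ 4 * hb6
    have hb2 : b * b = 1 := by linear_combination hb6 - b ^ 2 * hb4
    have u0 : p 0 = 1 := Units.val_inj.mp (by rw [Units.val_one]; exact ea)
    rcases mul_self_eq_one_iff.mp hb2 with hb | hb
    · have u1 : p 1 = 1 := Units.val_inj.mp (by rw [Units.val_one]; exact hb)
      left
      funext i
      fin_cases i
      · exact u0
      · exact u1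
      · show p 2 = 1; rw [h2, u0, u1]; norm_num
      · show p 3 = 1; rw [h3, u0, u1]; norm_num
      · show p 4 = 1; rw [h4, u0, u1]; norm_num
      · show p 5 = 1; rw [h5', u0]; norm_num
    · have u1 : p 1 = -1 := Units.val_inj.mp (by rw [Units.val_neg, Units.val_one]; exact hb)
      right
      funext i
      fin_cases i
      · show p 0 = vv 0; rw [u0, vv0]
      · show p 1 = vv 1; rw [u1, vv1]
      · show p 2 = vv 2; rw [h2, u0, u1, vv2, ← Units.val_inj]; push_cast; norm_num
      · show p 3 = vv 3; rw [h3, u0, u1, vv3, ← Units.val_inj]; push_cast; norm_num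
      · show p 4 = vv 4; rw [h4, u0, u1, vv4, ← Units.val_inj]; push_cast; norm_num
      · show p 5 = vv 5; rw [h5', u0, vv5]; norm_num
  · rintro (rfl | rfl)
    · norm_num
    · refine ⟨?_, ?_, ?_, ?_, ?_, ?_⟩ <;>
        simp only [vv0, vv1, vv2, vv3, vv4, vv5] <;>
        rw [← Units.val_inj] <;> push_cast <;> norm_num

private def Hgrp : Subgroup (Fin 6 → ℚˣ) where
  carrier := {1, vv}
  one_mem' := Or.inl rfl
  mul_mem' := by
    rintro a b (rfl | rfl) (rfl | rfl)
    · exact Or.inl (one_mul 1)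
    · exact Or.inr (one_mul vv)
    · exact Or.inr (mul_one vv)
    · exact Or.inl vv_mul_vv
  inv_mem' := by
    rintro a (rfl | rfl)
    · exact Or.inl inv_one
    · exact Or.inr (inv_eq_of_mul_eq_one_right vv_mul_vv)

theorem stmt_1 :
    ∃ H : Subgroup (Fin 6 → ℚˣ),
      (H : Set (Fin 6 → ℚˣ)) =
        {p : Fin 6 → ℚˣ | p 2 = p 0 ^ 3 * p 1 ∧
        p 3 = p 0 ^ 2 * p 1 ^ 2 ∧
        p 4 = p 0 * p 1 ^ 3 ∧
        p 5 = p 2 * p 3 * p 0 ^ 2 * p 1 ^ 3 ∧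
        p 5 = p 0 ^ 12 ∧
        p 5 = p 1 ^ 10} ∧
      Nat.card H = 2 ∧
      (∀ x ∈ H, x * x = 1) ∧
      Nonempty (H ≃* Multiplicative (ZMod 2)) ∧
      (H : Set (Fin 6 → ℚˣ)) = {1, ![1, -1, -1, 1, -1, 1]} := by
  have hset : (Hgrp : Set (Fin 6 → ℚˣ)) = {1, vv} := rfl
  have hcard : Nat.card Hgrp = 2 := by
    have h : Nat.card Hgrp = Nat.card ({1, vv} : Set (Fin 6 → ℚˣ)) :=
      Nat.card_congr (Equiv.setCongr hset)
    rw [h, Nat.card_coe_set_eq, Set.ncard_pair one_ne_vv]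
  refine ⟨Hgrp, by rw [hset, key_set], hcard, ?_, ?_, hset⟩
  · rintro x (rfl | rfl)
    · exact one_mul 1
    · exact vv_mul_vv
  · have hc : IsCyclic Hgrp := isCyclic_of_prime_card (p := 2) hcard
    exact ⟨((zmodCyclicMulEquiv hc).symm.trans (ZMod.ringEquivCongr hcard).toAddEquiv.toMultiplicative : Hgrp ≃* Multiplicative (ZMod 2))⟩
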